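/- Define y : ℝ → ℝ² by y(t) = (t − 1, G(t − 1)). Then y(−2) = (−3, 9·sin(−1/3)), y is differentiable at every t ∈ [−2,2] (one-sidedly at the endpoints) with derivative y'(t) = (1, g(t − 1)) = (1, g(y₁(t))), and y(t) ∈ [−5,5] × [−15,15] for all t ∈ [−2,2]. In particular, y solves on [−2,2] the initial value problem y'(t) = f(y(t)), y(−2) = (−3, 9·sin(−1/3)), where f : ℝ² → ℝ² is given by f(x, z) = (1, g(x)). -/

import Mathlib

open Set

noncomputable def gFun (x : ℝ) : ℝ :=
  if x = 0 then 0 else 2 * x * Real.sin (1 / x) - Real.cos (1 / x)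

noncomputable def GFun (x : ℝ) : ℝ :=
  if x = 0 then 0 else x ^ 2 * Real.sin (1 / x)

noncomputable def fRHS (p : ℝ × ℝ) : ℝ × ℝ := (1, gFun p.1)

lemma hasDerivAt_GFun (x : ℝ) : HasDerivAt GFun (gFun x) x := by
  rcases eq_or_ne x 0 with rfl | hx
  · simp only [gFun, if_pos rfl]
    rw [hasDerivAt_iff_tendsto_slope]
    have hb : ∀ᶠ z in nhdsWithin (0:ℝ) {0}ᶜ, ‖slope GFun 0 z‖ ≤ |z| := by
      filter_upwards [self_mem_nhdsWithin] with z (hz : z ≠ 0)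
      simp only [slope_def_field, GFun, if_neg hz, if_pos rfl, sub_zero]
      rw [if_pos trivial, sub_zero]
      have : z ^ 2 * Real.sin (1 / z) / z = z * Real.sin (1 / z) := by
        field_simp
      rw [this, Real.norm_eq_abs, abs_mul]
      calc |z| * |Real.sin (1 / z)| ≤ |z| * 1 :=
            mul_le_mul_of_nonneg_left (abs_le.mpr ⟨Real.neg_one_le_sin _, Real.sin_le_one _⟩) (abs_nonneg z)
        _ = |z| := mul_one _
    have ht : Filter.Tendsto (fun z : ℝ => |z|) (nhdsWithin (0:ℝ) {0}ᶜ) (nhds 0) := by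
      simpa using (continuous_abs.tendsto (0:ℝ)).mono_left nhdsWithin_le_nhds
    exact squeeze_zero_norm' hb ht
  · have hs : HasDerivAt (fun x : ℝ => Real.sin x⁻¹)
        (Real.cos x⁻¹ * (-(x ^ 2)⁻¹)) x :=
      (Real.hasDerivAt_sin x⁻¹).comp x (hasDerivAt_inv hx)
    have hp : HasDerivAt (fun x : ℝ => x ^ 2) (2 * x) x := by
      simpa using hasDerivAt_pow 2 x
    have h1 := hp.mul hs
    have heq : GFun =ᶠ[nhds x] fun x => x ^ 2 * Real.sin x⁻¹ := by
      filter_upwards [isOpen_ne.mem_nhds hx] with z hz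
      simp [GFun, if_neg hz, one_div]
    have h2 := h1.congr_of_eventuallyEq heq
    refine h2.congr_deriv ?_
    symm
    rw [gFun, if_neg hx]
    rw [one_div]
    field_simp
    ring

theorem stmt_11 (y : ℝ → ℝ × ℝ) (hy : y = fun t => (t - 1, GFun (t - 1))) :
    y (-2) = (-3, 9 * Real.sin (-(1 / 3))) ∧
    (∀ t ∈ Icc (-2 : ℝ) 2,
      HasDerivWithinAt y (1, gFun (t - 1)) (Icc (-2 : ℝ) 2) t ∧
      (1, gFun (t - 1)) = (1, gFun ((y t).1)) ∧
      (1, gFun (t - 1)) = fRHS (y t)) ∧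
    (∀ t ∈ Icc (-2 : ℝ) 2, y t ∈ Icc (-5 : ℝ) 5 ×ˢ Icc (-15 : ℝ) 15) := by
  subst hy
  refine ⟨?_, ?_, ?_⟩
  · have : (-2 : ℝ) - 1 = -3 := by norm_num
    simp only [this, GFun, if_neg (by norm_num : (-3:ℝ) ≠ 0)]
    norm_num [Real.sin_neg]
  · intro t ht
    refine ⟨?_, rfl, rfl⟩
    have h1 : HasDerivWithinAt (fun t : ℝ => t - 1) 1 (Icc (-2:ℝ) 2) t :=
      ((hasDerivAt_id t).sub_const 1).hasDerivWithinAt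
    have h2 : HasDerivWithinAt (fun t : ℝ => GFun (t - 1)) (gFun (t - 1)) (Icc (-2:ℝ) 2) t := by
      have := (hasDerivAt_GFun (t - 1)).comp t ((hasDerivAt_id t).sub_const 1)
      exact this.hasDerivWithinAt.congr_deriv (mul_one _)
    exact h1.prodMk h2
  · intro t ht
    obtain ⟨h1, h2⟩ := ht
    constructor
    · constructor <;> simp <;> linarith
    · have hb : |GFun (t - 1)| ≤ (t - 1) ^ 2 := by
        rcases eq_or_ne (t - 1) 0 with h | h
        · simp [GFun, h]
        · rw [GFun, if_neg h, abs_mul, abs_pow, sq_abs]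
          calc (t-1)^2 * |Real.sin (1/(t-1))| ≤ (t-1)^2 * 1 :=
                mul_le_mul_of_nonneg_left (abs_le.mpr ⟨Real.neg_one_le_sin _, Real.sin_le_one _⟩) (sq_nonneg _)
            _ = (t-1)^2 := mul_one _
      have h9 : (t - 1) ^ 2 ≤ 9 := by nlinarith
      have := abs_le.mp (hb.trans h9)
      constructor <;> simp <;> linarith [this.1, this.2]
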